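/- The operator norm of the block matrix C + T = [[0, α·(V×)], [-β·(V×), 0]] equals max{α|V|, β|V|}, where α = (μ₀/(με₀))(1/c_Ω² − 1/c²) and β = (ε₀/(μ₀ε))(1/c_Ω² − 1/c²), assuming c_Ω ≤ c. -/

import Mathlib

/-- The cross product with `V` as a continuous linear map on Euclidean `ℝ³`. -/
noncomputable def crossCLM (V : EuclideanSpace ℝ (Fin 3)) :
    EuclideanSpace ℝ (Fin 3) →L[ℝ] EuclideanSpace ℝ (Fin 3) :=
  LinearMap.toContinuousLinearMap
    { toFun := fun x => WithLp.toLp 2 (crossProduct V x)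
      map_add' := fun x y => by simp
      map_smul' := fun c x => by simp }

/-- The block operator `[[0, a·(V×)], [b·(V×), 0]]` on `ℝ³ × ℝ³` (max of Euclidean norms). -/
noncomputable def offDiagCross (a b : ℝ) (V : EuclideanSpace ℝ (Fin 3)) :
    (EuclideanSpace ℝ (Fin 3) × EuclideanSpace ℝ (Fin 3)) →L[ℝ]
      (EuclideanSpace ℝ (Fin 3) × EuclideanSpace ℝ (Fin 3)) :=
  ((a • crossCLM V).comp (ContinuousLinearMap.snd ℝ _ _)).prod
    ((b • crossCLM V).comp (ContinuousLinearMap.fst ℝ _ _))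

open scoped RealInnerProductSpace

lemma euclid_norm_sq (v : EuclideanSpace ℝ (Fin 3)) : ‖v‖^2 = ∑ i, (v i)^2 := by
  rw [EuclideanSpace.norm_sq_eq]
  simp [Real.norm_eq_abs, sq_abs]

lemma cross_norm_sq (V x : EuclideanSpace ℝ (Fin 3)) :
    ‖crossCLM V x‖^2 = ‖V‖^2 * ‖x‖^2 - (⟪V, x⟫)^2 := by
  have hi : ⟪V, x⟫ = ∑ i, V i * x i := by simp [PiLp.inner_apply, mul_comm]
  have happ : ∀ i, crossCLM V x i = (crossProduct V x) i := fun i => by simp [crossCLM]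
  rw [euclid_norm_sq, euclid_norm_sq, euclid_norm_sq, hi]
  simp only [happ, cross_apply, Fin.sum_univ_three, Matrix.cons_val_zero,
    Matrix.cons_val_one, Matrix.head_cons, Matrix.cons_val_two, Matrix.tail_cons]
  ring

lemma cross_norm_le (V x : EuclideanSpace ℝ (Fin 3)) :
    ‖crossCLM V x‖ ≤ ‖V‖ * ‖x‖ := by
  have h := cross_norm_sq V x
  nlinarith [norm_nonneg (crossCLM V x), norm_nonneg V, norm_nonneg x,
    sq_nonneg (⟪V, x⟫), mul_nonneg (norm_nonneg V) (norm_nonneg x)]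

lemma cross_norm_perp (V x : EuclideanSpace ℝ (Fin 3)) (h : ⟪V, x⟫ = 0) :
    ‖crossCLM V x‖ = ‖V‖ * ‖x‖ := by
  have hs := cross_norm_sq V x
  rw [h] at hs
  have h1 : ‖crossCLM V x‖^2 = (‖V‖ * ‖x‖)^2 := by rw [hs]; ring
  have h2 : (0:ℝ) ≤ ‖V‖ * ‖x‖ := mul_nonneg (norm_nonneg V) (norm_nonneg x)
  rw [← Real.sqrt_sq (norm_nonneg (crossCLM V x)), ← Real.sqrt_sq h2, h1]

lemma exists_perp (V : EuclideanSpace ℝ (Fin 3)) (hV : V ≠ 0) :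
    ∃ x : EuclideanSpace ℝ (Fin 3), x ≠ 0 ∧ ⟪V, x⟫ = 0 := by
  have hdim : Module.finrank ℝ ((ℝ ∙ V)ᗮ : Submodule ℝ (EuclideanSpace ℝ (Fin 3))) = 2 := by
    have h := Submodule.finrank_add_finrank_orthogonal (K := ℝ ∙ V)
    rw [finrank_span_singleton hV, finrank_euclideanSpace_fin] at h
    omega
  have hne : ((ℝ ∙ V)ᗮ : Submodule ℝ (EuclideanSpace ℝ (Fin 3))) ≠ ⊥ := by
    intro h
    rw [h, finrank_bot] at hdim
    omega
  obtain ⟨x, hx, hx0⟩ := Submodule.exists_mem_ne_zero_of_ne_bot hne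
  exact ⟨x, hx0, (Submodule.mem_orthogonal _ x).mp hx V (Submodule.mem_span_singleton_self V)⟩

lemma norm_offDiagCross (a b : ℝ) (V : EuclideanSpace ℝ (Fin 3)) :
    ‖offDiagCross a b V‖ = max (|a| * ‖V‖) (|b| * ‖V‖) := by
  have happ : ∀ z : EuclideanSpace ℝ (Fin 3) × EuclideanSpace ℝ (Fin 3),
      offDiagCross a b V z = (a • crossCLM V z.2, b • crossCLM V z.1) := fun z => rfl
  apply le_antisymm
  · apply ContinuousLinearMap.opNorm_le_bound
    · exact le_max_of_le_left (mul_nonneg (abs_nonneg a) (norm_nonneg V))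
    · intro z
      rw [happ, Prod.norm_def]
      simp only [norm_smul, Real.norm_eq_abs]
      have h1 : ‖z.1‖ ≤ ‖z‖ := norm_fst_le z
      have h2 : ‖z.2‖ ≤ ‖z‖ := norm_snd_le z
      have hc1 := cross_norm_le V z.1
      have hc2 := cross_norm_le V z.2
      apply max_le
      · calc |a| * ‖crossCLM V z.2‖ ≤ |a| * (‖V‖ * ‖z‖) := by
              apply mul_le_mul_of_nonneg_left _ (abs_nonneg a)
              exact hc2.trans (mul_le_mul_of_nonneg_left h2 (norm_nonneg V))
          _ = (|a| * ‖V‖) * ‖z‖ := by ring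
          _ ≤ max (|a| * ‖V‖) (|b| * ‖V‖) * ‖z‖ :=
              mul_le_mul_of_nonneg_right (le_max_left _ _) (norm_nonneg z)
      · calc |b| * ‖crossCLM V z.1‖ ≤ |b| * (‖V‖ * ‖z‖) := by
              apply mul_le_mul_of_nonneg_left _ (abs_nonneg b)
              exact hc1.trans (mul_le_mul_of_nonneg_left h1 (norm_nonneg V))
          _ = (|b| * ‖V‖) * ‖z‖ := by ring
          _ ≤ max (|a| * ‖V‖) (|b| * ‖V‖) * ‖z‖ :=
              mul_le_mul_of_nonneg_right (le_max_right _ _) (norm_nonneg z)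
  · by_cases hV : V = 0
    · simp [hV]
    · obtain ⟨x, hx0, hperp⟩ := exists_perp V hV
      have hxpos : (0:ℝ) < ‖x‖ := norm_pos_iff.mpr hx0
      have hcx : ‖crossCLM V x‖ = ‖V‖ * ‖x‖ := cross_norm_perp V x hperp
      apply max_le
      · have h := (offDiagCross a b V).le_opNorm ((0 : EuclideanSpace ℝ (Fin 3)), x)
        rw [happ] at h
        simp only [map_zero, smul_zero, Prod.norm_def, norm_zero, norm_smul,
          Real.norm_eq_abs] at h
        rw [hcx] at h
        have h' : |a| * (‖V‖ * ‖x‖) ≤ ‖offDiagCross a b V‖ * ‖x‖ := by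
          refine le_trans (le_max_left _ 0) (h.trans_eq ?_)
          rw [max_eq_right (norm_nonneg x)]
        nlinarith
      · have h := (offDiagCross a b V).le_opNorm (x, (0 : EuclideanSpace ℝ (Fin 3)))
        rw [happ] at h
        simp only [map_zero, smul_zero, Prod.norm_def, norm_zero, norm_smul,
          Real.norm_eq_abs] at h
        rw [hcx] at h
        have h' : |b| * (‖V‖ * ‖x‖) ≤ ‖offDiagCross a b V‖ * ‖x‖ := by
          refine le_trans (le_max_right 0 _) (h.trans_eq ?_)
          rw [max_eq_left (norm_nonneg x)]
        nlinarith

/-- The operator norm of `C + T = [[0, α·(V×)], [-β·(V×), 0]]` equals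
`max {α|V|, β|V|}`, where `α = (μ₀/(με₀))(1/c_Ω² − 1/c²)` and
`β = (ε₀/(μ₀ε))(1/c_Ω² − 1/c²)`, assuming `c_Ω ≤ c`. -/
theorem opNorm_C_plus_T (ε μ ε₀ μ₀ c cΩ α β : ℝ)
    (hε : 0 < ε) (hμ : 0 < μ) (hε₀ : 0 < ε₀) (hμ₀ : 0 < μ₀)
    (hc : c = 1 / Real.sqrt (ε₀ * μ₀)) (hcΩ : cΩ = 1 / Real.sqrt (ε * μ))
    (hle : cΩ ≤ c)
    (hα : α = μ₀ / (μ * ε₀) * (1 / cΩ ^ 2 - 1 / c ^ 2))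
    (hβ : β = ε₀ / (μ₀ * ε) * (1 / cΩ ^ 2 - 1 / c ^ 2))
    (V : EuclideanSpace ℝ (Fin 3)) :
    ‖offDiagCross α (-β) V‖ = max (α * ‖V‖) (β * ‖V‖) := by
  have hc0 : 0 < c := by rw [hc]; positivity
  have hΩ0 : 0 < cΩ := by rw [hcΩ]; positivity
  have hsq : 1 / c ^ 2 ≤ 1 / cΩ ^ 2 := by
    apply one_div_le_one_div_of_le (by positivity)
    exact pow_le_pow_left₀ hΩ0.le hle 2
  have hα0 : 0 ≤ α := by
    rw [hα]; apply mul_nonneg (by positivity); linarith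
  have hβ0 : 0 ≤ β := by
    rw [hβ]; apply mul_nonneg (by positivity); linarith
  rw [norm_offDiagCross, abs_of_nonneg hα0, abs_neg, abs_of_nonneg hβ0]
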